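/- Let T be the rooted k-uniform hypergraph with a non-roots (white vertices) arranged in a row with edges on every k consecutive white vertices, plus b-a+k-1 roots, where the i-th root (1 ≤ i ≤ b-a+k-2) is joined by an edge to the ⌊1 + (i-1)(a-k+2)/(b-a+k-2)⌋-th set of k-1 consecutive white vertices and the last root to the (a-k+2)-th such set; assume b ≥ a-k+3 and a ≥ k. Then for every nonempty subset S of the non-roots, the number of edges of T meeting S is at least |S|·b/a. -/

import Mathlib

open Finset

/-- Vertices of the hypergraph `T`: `Sum.inl i` is the `i`-th white (non-root) vertex
(0-indexed, `0 ≤ i < a`), `Sum.inr i` is the `i`-th root (0-indexed). -/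
abbrev TVertex : Type := ℕ ⊕ ℕ

/-- The set of `len` consecutive white vertices starting at position `j`. -/
def whiteSeg (j len : ℕ) : Finset TVertex :=
  (Finset.range len).image (fun t => Sum.inl (j + t))

/-- The `i`-th red edge: `k` consecutive white vertices starting at `i`. -/
def redEdge (k i : ℕ) : Finset TVertex := whiteSeg i k

/-- Position (0-indexed) of the set of `k-1` consecutive white vertices to which the
`i`-th root is joined: `⌊i(a-k+2)/(b-a+k-2)⌋` (the 1-indexed formula
`⌊1+(i-1)(a-k+2)/(b-a+k-2)⌋` of the paper), except that the last root is joined to the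
last such set, at position `a-k+1` (the `(a-k+2)`-th set, 1-indexed). -/
def rootPos (k a b i : ℕ) : ℕ :=
  if i = b - a + k - 2 then a - k + 1 else (i * (a - k + 2)) / (b - a + k - 2)

/-- The `i`-th green edge: the `i`-th root together with its `k-1` consecutive white
vertices. -/
def greenEdge (k a b i : ℕ) : Finset TVertex :=
  insert (Sum.inr i) (whiteSeg (rootPos k a b i) (k - 1))

/-- The edge set of the rooted hypergraph `T`: the `a-k+1` red edges together with the
`b-a+k-1` green edges (one per root), `b` edges in total. -/
def TEdges (k a b : ℕ) : Finset (Finset TVertex) :=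
  ((Finset.range (a - k + 1)).image (redEdge k)) ∪
    ((Finset.range (b - a + k - 1)).image (greenEdge k a b))

/-- The set of white (non-root) vertices of `T`. -/
def whites (a : ℕ) : Finset TVertex := (Finset.range a).image Sum.inl

lemma mem_whiteSeg {j len v : ℕ} : Sum.inl v ∈ whiteSeg j len ↔ j ≤ v ∧ v < j + len := by
  simp only [whiteSeg, mem_image, mem_range]
  constructor
  · rintro ⟨t, ht, h⟩; injection h with h; omega
  · rintro ⟨h1, h2⟩; exact ⟨v - j, by omega, by congr 1; omega⟩

lemma inr_not_mem_whiteSeg {j len r : ℕ} : Sum.inr r ∉ whiteSeg j len := by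
  simp [whiteSeg]

lemma ceil_le_mul (w e : ℕ) : w ≤ ((w + e) / (e + 1)) * (e + 1) := by
  have h1 := Nat.div_add_mod (w + e) (e + 1)
  have h2 : (w + e) % (e + 1) < e + 1 := Nat.mod_lt _ (by omega)
  set q := (w + e) / (e + 1) with hq
  set r := (w + e) % (e + 1) with hr
  clear_value q r
  nlinarith

lemma lt_of_lt_ceil {w e i : ℕ} (h : i < (w + e) / (e + 1)) : i * (e + 1) < w := by
  have h1 := Nat.div_add_mod (w + e) (e + 1)
  have h2 : (w + e) % (e + 1) < e + 1 := Nat.mod_lt _ (by omega)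
  set q := (w + e) / (e + 1) with hq
  set r := (w + e) % (e + 1) with hr
  clear_value q r
  have h3 : (e + 1) * (i + 1) ≤ (e + 1) * q := Nat.mul_le_mul_left _ h
  nlinarith

lemma exists_hit {k : ℕ} (hk : 2 ≤ k) {Sn : Finset ℕ} (hne : Sn.Nonempty)
    (hgap : ∀ u ∈ Sn, u < Sn.max' hne → ∃ v ∈ Sn, u < v ∧ v ≤ u + (k - 1))
    {j w : ℕ} (hw : k - 1 ≤ w) (hxj : Sn.min' hne ≤ j + w - 1) (hjy : j ≤ Sn.max' hne) :
    ∃ v ∈ Sn, j ≤ v ∧ v ≤ j + w - 1 := by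
  have hxS : Sn.min' hne ∈ Sn := Sn.min'_mem hne
  set T := Sn.filter (fun v => v ≤ j + w - 1) with hT
  have hxT : Sn.min' hne ∈ T := mem_filter.mpr ⟨hxS, hxj⟩
  have hTne : T.Nonempty := ⟨_, hxT⟩
  have hvT : T.max' hTne ∈ T := T.max'_mem hTne
  have hvS : T.max' hTne ∈ Sn := (mem_filter.mp hvT).1
  have hvle : T.max' hTne ≤ j + w - 1 := (mem_filter.mp hvT).2
  rcases le_or_gt j (T.max' hTne) with h | h
  · exact ⟨_, hvS, h, hvle⟩
  · have hvy : T.max' hTne < Sn.max' hne := lt_of_lt_of_le h hjy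
    obtain ⟨u, huS, hu1, hu2⟩ := hgap _ hvS hvy
    have huT : u ∈ T := mem_filter.mpr ⟨huS, by omega⟩
    exact absurd (T.le_max' u huT) (by omega)
set_option maxHeartbeats 1000000 in
lemma final_arith (k a b x y M e CP CQ G : ℕ)
    (hk : 2 ≤ k) (ha : k ≤ a) (hb : a - k + 3 ≤ b)
    (he : e = a - k + 1) (hM : M = b - a + k - 2)
    (hxy : x ≤ y) (hya : y < a)
    (f1 : CP * (e + 1) ≤ (x - (k - 2)) * M + e)
    (f2 : x - (k - 2) = 0 → CP = 0)
    (f3 : (min y (a - k + 1) + 1) * M ≤ CQ * (e + 1))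
    (f4 : CQ ≤ M)
    (hG : CQ - CP + (if a - k + 1 ≤ y then 1 else 0) ≤ G) :
    (y + 1 - x) * ((a - k + 1) + (b - a + k - 1)) ≤
      a * ((min y (a - k) + 1 - (x - (k - 1))) + G) := by
  have hM1 : 1 ≤ M := by omega
  have hme : (a - k + 1) + (b - a + k - 1) = (e + 1) + M := by omega
  rw [hme]
  have hOe : (0:ℤ) ≤ (e:ℤ) + 1 := by positivity
  have hOa : (0:ℤ) ≤ (a:ℤ) := by positivity
  have hae : (e : ℤ) + 1 ≤ a := by omega
  rcases le_or_gt x (k - 2) with hx1 | hx1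
  · -- P = 0
    have hCP0 : CP = 0 := f2 (by omega)
    have hsub1 : x - (k - 1) = 0 := by omega
    rcases le_or_gt y (a - k) with hy1 | hy1
    · -- B1
      have hmin1 : min y (a - k) = y := by omega
      have hmin2 : min y (a - k + 1) = y := by omega
      rw [if_neg (by omega)] at hG
      rw [hmin2] at f3
      have hCQG : CQ ≤ G := by omega
      rw [hmin1, hsub1]
      simp only [Nat.sub_zero]
      have key : (y + 1) * M ≤ G * (e + 1) :=
        le_trans f3 (Nat.mul_le_mul_right _ hCQG)
      zify [show x ≤ y + 1 by omega] at key ⊢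
      rw [← mul_le_mul_iff_of_pos_right (show (0:ℤ) < e + 1 by positivity)]
      have hk2 : (a:ℤ) * (((y:ℤ) + 1) * M) ≤ a * ((G:ℤ) * (e + 1)) :=
        mul_le_mul_of_nonneg_left key hOa
      have c1 : (0:ℤ) ≤ ((y:ℤ) + 1) * ((a:ℤ) - e - 1) * ((e:ℤ) + 1) :=
        mul_nonneg (mul_nonneg (by omega) (by omega)) (by positivity)
      have c2 : (0:ℤ) ≤ ((y:ℤ) + 1) * ((a:ℤ) - e - 1) * (M:ℤ) :=
        mul_nonneg (mul_nonneg (by omega) (by omega)) (by positivity)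
      have c3 : (0:ℤ) ≤ (x:ℤ) * ((e:ℤ) + 1) * ((e:ℤ) + 1 + M) :=
        mul_nonneg (mul_nonneg (by positivity) (by positivity)) (by positivity)
      nlinarith [hk2, c1, c2, c3]
    · -- B2
      have hmin1 : min y (a - k) = a - k := by omega
      have hmin2 : min y (a - k + 1) = a - k + 1 := by omega
      rw [if_pos (by omega)] at hG
      rw [hmin2] at f3
      have hf3' : (e + 1) * M ≤ (e + 1) * CQ := by
        calc (e + 1) * M = (a - k + 1 + 1) * M := by rw [he]
          _ ≤ CQ * (e + 1) := f3
          _ = (e + 1) * CQ := Nat.mul_comm _ _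
      have hMCQ : M ≤ CQ := Nat.le_of_mul_le_mul_left hf3' (by omega)
      have hMG : M + 1 ≤ G := by omega
      rw [hmin1, hsub1]
      simp only [Nat.sub_zero]
      calc (y + 1 - x) * ((e + 1) + M) ≤ a * ((e + 1) + M) :=
            Nat.mul_le_mul_right _ (by omega)
        _ = a * ((a - k + 1) + (M + 1)) := by congr 1; omega
        _ ≤ a * ((a - k + 1) + G) := Nat.mul_le_mul_left _ (by omega)
        _ = a * ((a - k) + 1 + G) := by congr 1
  · -- P > 0
    have hsub2 : k - 2 ≤ x := by omega
    zify [hsub2, hk] at f1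
    rw [show ((k:ℤ)) = (a:ℤ) - e + 1 by omega] at f1
    rcases le_or_gt y (a - k) with hy1 | hy1
    · -- B3
      have hmin1 : min y (a - k) = y := by omega
      have hmin2 : min y (a - k + 1) = y := by omega
      rw [if_neg (by omega)] at hG
      rw [hmin2] at f3
      have hGK : CQ ≤ G + CP := by omega
      have hR : min y (a - k) + 1 - (x - (k - 1)) = y + 1 + k - 1 - x := by omega
      rw [hR]
      zify [show x ≤ y + 1 by omega, show x ≤ y + 1 + k - 1 by omega,
        show 1 ≤ y + 1 + k by omega]
      zify at f3 hGK
      rw [show ((k:ℤ)) = (a:ℤ) - e + 1 by omega]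
      rw [← mul_le_mul_iff_of_pos_right (show (0:ℤ) < e + 1 by positivity)]
      have s1 : (a:ℤ) * (((y:ℤ) + 1) * M) ≤ a * ((CQ:ℤ) * (e + 1)) :=
        mul_le_mul_of_nonneg_left f3 hOa
      have s2 : (a:ℤ) * ((CQ:ℤ) * ((e:ℤ)+1)) ≤ a * (((G:ℤ) + CP) * ((e:ℤ)+1)) :=
        mul_le_mul_of_nonneg_left (mul_le_mul_of_nonneg_right hGK hOe) hOa
      have s3 : (a:ℤ) * ((CP:ℤ) * ((e:ℤ) + 1)) ≤
          a * (((x:ℤ) - ((a:ℤ) - e + 1 - 2)) * M + e) :=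
        mul_le_mul_of_nonneg_left f1 hOa
      have c1 : (0:ℤ) ≤ ((y:ℤ) + 1 - x) * ((a:ℤ) - e - 1) * ((e:ℤ) + 1 + M) :=
        mul_nonneg (mul_nonneg (by omega) (by omega)) (by positivity)
      have c2 : (0:ℤ) ≤ (a:ℤ) * (((e:ℤ)+1) * ((a:ℤ)-e-1) + ((a:ℤ)-e-1) * M + 1) := by
        have h1 : (0:ℤ) ≤ ((e:ℤ)+1) * ((a:ℤ)-e-1) := mul_nonneg (by positivity) (by omega)
        have h2 : (0:ℤ) ≤ ((a:ℤ)-e-1) * M := mul_nonneg (by omega) (by positivity)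
        exact mul_nonneg hOa (by linarith)
      nlinarith [s1, s2, s3, c1, c2]
    · -- B4
      have hmin1 : min y (a - k) = a - k := by omega
      have hmin2 : min y (a - k + 1) = a - k + 1 := by omega
      rw [if_pos (by omega)] at hG
      rw [hmin2] at f3
      have hf3' : (e + 1) * M ≤ (e + 1) * CQ := by
        calc (e + 1) * M = (a - k + 1 + 1) * M := by rw [he]
          _ ≤ CQ * (e + 1) := f3
          _ = (e + 1) * CQ := Nat.mul_comm _ _
      have hMCQ : M ≤ CQ := Nat.le_of_mul_le_mul_left hf3' (by omega)
      have hGK : M + 1 ≤ G + CP := by omega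
      have hR : min y (a - k) + 1 - (x - (k - 1)) = a - x := by omega
      rw [hR]
      zify [show x ≤ y + 1 by omega, show x ≤ a by omega]
      zify at hGK
      rw [← mul_le_mul_iff_of_pos_right (show (0:ℤ) < e + 1 by positivity)]
      have s2 : (a:ℤ) * (((M:ℤ) + 1) * ((e:ℤ)+1)) ≤ a * (((G:ℤ) + CP) * ((e:ℤ)+1)) :=
        mul_le_mul_of_nonneg_left (mul_le_mul_of_nonneg_right hGK hOe) hOa
      have s3 : (a:ℤ) * ((CP:ℤ) * ((e:ℤ) + 1)) ≤
          a * (((x:ℤ) - ((a:ℤ) - e + 1 - 2)) * M + e) :=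
        mul_le_mul_of_nonneg_left f1 hOa
      have c1 : (0:ℤ) ≤ ((a:ℤ) - x - ((y:ℤ) + 1 - x)) * (a:ℤ) * ((e:ℤ) + 1 + M) :=
        mul_nonneg (mul_nonneg (by omega) hOa) (by positivity)
      have c2 : (0:ℤ) ≤ ((y:ℤ) + 1 - x) * ((a:ℤ) - e - 1) * ((e:ℤ) + 1 + M) :=
        mul_nonneg (mul_nonneg (by omega) (by omega)) (by positivity)
      nlinarith [s2, s3, c1, c2]


lemma rootPos_last {k a b : ℕ} : rootPos k a b (b - a + k - 2) = a - k + 1 := by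
  rw [rootPos, if_pos rfl]

set_option maxHeartbeats 1000000 in
lemma cluster (k a b : ℕ) (hk : 2 ≤ k) (ha : k ≤ a) (hb : a - k + 3 ≤ b)
    (Sn : Finset ℕ) (hsub : Sn ⊆ range a) (hne : Sn.Nonempty)
    (hgap : ∀ u ∈ Sn, u < Sn.max' hne → ∃ v ∈ Sn, u < v ∧ v ≤ u + (k - 1)) :
    Sn.card * ((a - k + 1) + (b - a + k - 1)) ≤
      a * (((range (a - k + 1)).filter (fun i => ∃ v ∈ Sn, i ≤ v ∧ v < i + k)).card +
           ((range (b - a + k - 1)).filter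
              (fun i => ∃ v ∈ Sn, rootPos k a b i ≤ v ∧ v < rootPos k a b i + (k - 1))).card) := by
  have hxy : Sn.min' hne ≤ Sn.max' hne := Sn.min'_le _ (Sn.max'_mem hne)
  set x := Sn.min' hne with hx
  set y := Sn.max' hne with hy
  have hya : y < a := mem_range.mp (hsub (Sn.max'_mem hne))
  have hm : 2 ≤ b - a + k - 1 := by omega
  have hM1 : 1 ≤ b - a + k - 2 := by omega
  -- red edges hit
  have hR : ((range (a - k + 1)).filter (fun i => ∃ v ∈ Sn, i ≤ v ∧ v < i + k))
      = Icc (x - (k - 1)) (min y (a - k)) := by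
    ext i
    simp only [mem_filter, mem_range, mem_Icc]
    constructor
    · rintro ⟨hi, v, hv, h1, h2⟩
      have l1 : x ≤ v := Sn.min'_le v hv
      have l2 : v ≤ y := Sn.le_max' v hv
      omega
    · intro hi
      refine ⟨by omega, ?_⟩
      obtain ⟨v, hvS, h1, h2⟩ := exists_hit hk hne hgap (w := k) (j := i)
        (by omega) (by omega) (by omega)
      exact ⟨v, hvS, h1, by omega⟩
  set P := x - (k - 2) with hP
  set Q := min y (a - k + 1) with hQ
  set CP := (P * (b - a + k - 2) + (a - k + 1)) / ((a - k + 1) + 1) with hCP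
  set CQ := ((Q + 1) * (b - a + k - 2) + (a - k + 1)) / ((a - k + 1) + 1) with hCQdef
  have hCQM : CQ ≤ b - a + k - 2 := by
    have h1 : (Q + 1) * (b - a + k - 2) ≤ ((a - k + 1) + 1) * (b - a + k - 2) :=
      Nat.mul_le_mul_right _ (by omega)
    have h2 : CQ < (b - a + k - 2) + 1 := by
      rw [hCQdef, Nat.div_lt_iff_lt_mul (show 0 < (a - k + 1) + 1 by omega)]
      nlinarith
    omega
  -- green edges hit: lower bound set
  have hGsub : (Ico CP CQ) ∪ (if a - k + 1 ≤ y then {b - a + k - 2} else ∅) ⊆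
      ((range (b - a + k - 1)).filter
        (fun i => ∃ v ∈ Sn, rootPos k a b i ≤ v ∧ v < rootPos k a b i + (k - 1))) := by
    intro i hi
    simp only [mem_union, mem_Ico] at hi
    rcases hi with ⟨hi1, hi2⟩ | hi
    · have hiM : i < b - a + k - 2 := lt_of_lt_of_le hi2 hCQM
      have hrp : rootPos k a b i = i * ((a - k + 1) + 1) / (b - a + k - 2) := by
        rw [rootPos, if_neg (show ¬ i = b - a + k - 2 by omega)]
      have hrpP : P ≤ rootPos k a b i := by
        rw [hrp, Nat.le_div_iff_mul_le (show 0 < b - a + k - 2 by omega)]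
        calc P * (b - a + k - 2) ≤ CP * ((a - k + 1) + 1) := ceil_le_mul _ _
          _ ≤ i * ((a - k + 1) + 1) := Nat.mul_le_mul_right _ hi1
      have hrpQ : rootPos k a b i ≤ Q := by
        have h3 : rootPos k a b i < Q + 1 := by
          rw [hrp, Nat.div_lt_iff_lt_mul (show 0 < b - a + k - 2 by omega)]
          exact lt_of_lt_ceil hi2
        omega
      simp only [mem_filter, mem_range]
      refine ⟨by omega, ?_⟩
      obtain ⟨v, hvS, h1, h2⟩ := exists_hit hk hne hgap (w := k - 1)
        (j := rootPos k a b i) (le_refl _) (by omega) (by omega)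
      exact ⟨v, hvS, h1, by omega⟩
    · have hcond : a - k + 1 ≤ y := by
        by_contra hc
        rw [if_neg hc] at hi
        exact absurd hi (Finset.notMem_empty i)
      rw [if_pos hcond, mem_singleton] at hi
      subst hi
      have hrp : rootPos k a b (b - a + k - 2) = a - k + 1 := rootPos_last
      simp only [mem_filter, mem_range]
      refine ⟨by omega, ?_⟩
      obtain ⟨v, hvS, h1, h2⟩ := exists_hit hk hne hgap (w := k - 1)
        (j := rootPos k a b (b - a + k - 2)) (le_refl _) (by rw [hrp]; omega)
        (by rw [hrp]; omega)
      exact ⟨v, hvS, h1, by omega⟩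
  -- counting green
  have hdisj : Disjoint (Ico CP CQ) (if a - k + 1 ≤ y then ({b - a + k - 2} : Finset ℕ) else ∅) := by
    split_ifs
    · simp only [disjoint_singleton_right, mem_Ico]
      omega
    · exact disjoint_empty_right _
  have hGcard : CQ - CP + (if a - k + 1 ≤ y then 1 else 0) ≤
      ((range (b - a + k - 1)).filter
        (fun i => ∃ v ∈ Sn, rootPos k a b i ≤ v ∧ v < rootPos k a b i + (k - 1))).card := by
    have h0 := card_le_card hGsub
    rw [card_union_of_disjoint hdisj, Nat.card_Ico] at h0
    have h1 : (if a - k + 1 ≤ y then ({b - a + k - 2} : Finset ℕ) else ∅).card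
        = (if a - k + 1 ≤ y then 1 else 0) := by
      split_ifs <;> simp
    rw [h1] at h0
    exact h0
  have hRcard : ((range (a - k + 1)).filter (fun i => ∃ v ∈ Sn, i ≤ v ∧ v < i + k)).card
      = min y (a - k) + 1 - (x - (k - 1)) := by
    rw [hR, Nat.card_Icc]
  have hScard : Sn.card ≤ y + 1 - x := by
    have hsub2 : Sn ⊆ Icc x y := fun v hv => mem_Icc.mpr ⟨Sn.min'_le v hv, Sn.le_max' v hv⟩
    have h2 := card_le_card hsub2
    rwa [Nat.card_Icc] at h2
  have hf2 : x - (k - 2) = 0 → CP = 0 := by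
    intro h0
    have hP0 : P = 0 := by omega
    rw [hCP, hP0]
    simp [Nat.div_eq_of_lt]
  have main := final_arith k a b x y (b - a + k - 2) (a - k + 1) CP CQ
    (((range (b - a + k - 1)).filter
        (fun i => ∃ v ∈ Sn, rootPos k a b i ≤ v ∧ v < rootPos k a b i + (k - 1))).card)
    hk ha hb rfl rfl hxy hya
    (Nat.div_mul_le_self _ _)
    hf2
    (ceil_le_mul _ _)
    hCQM hGcard
  calc Sn.card * ((a - k + 1) + (b - a + k - 1))
      ≤ (y + 1 - x) * ((a - k + 1) + (b - a + k - 1)) := Nat.mul_le_mul_right _ hScard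
    _ ≤ a * ((min y (a - k) + 1 - (x - (k - 1))) +
          (((range (b - a + k - 1)).filter
            (fun i => ∃ v ∈ Sn, rootPos k a b i ≤ v ∧ v < rootPos k a b i + (k - 1))).card)) := main
    _ = _ := by rw [hRcard]

set_option maxHeartbeats 1000000 in
lemma main_nat (k a b : ℕ) (hk : 2 ≤ k) (ha : k ≤ a) (hb : a - k + 3 ≤ b)
    (Sn : Finset ℕ) : Sn ⊆ range a → Sn.Nonempty →
    Sn.card * ((a - k + 1) + (b - a + k - 1)) ≤
      a * (((range (a - k + 1)).filter (fun i => ∃ v ∈ Sn, i ≤ v ∧ v < i + k)).card +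
           ((range (b - a + k - 1)).filter
              (fun i => ∃ v ∈ Sn, rootPos k a b i ≤ v ∧ v < rootPos k a b i + (k - 1))).card) := by
  induction Sn using Finset.strongInduction with
  | _ Sn IH =>
    intro hsub hne
    by_cases hgap : ∀ u ∈ Sn, u < Sn.max' hne → ∃ v ∈ Sn, u < v ∧ v ≤ u + (k - 1)
    · exact cluster k a b hk ha hb Sn hsub hne hgap
    · push_neg at hgap
      obtain ⟨u, huS, huy, hnog⟩ := hgap
      set S1 := Sn.filter (fun v => v ≤ u) with hS1
      set S2 := Sn.filter (fun v => ¬ v ≤ u) with hS2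
      have hub : ∀ v ∈ S1, v ≤ u := fun v hv => (mem_filter.mp hv).2
      have hek : ∀ v ∈ S2, u + k ≤ v := by
        intro v hv
        rw [hS2, mem_filter] at hv
        have h3 := hnog v hv.1
        omega
      have hS1ne : S1.Nonempty := ⟨u, mem_filter.mpr ⟨huS, le_refl u⟩⟩
      have hyS2 : Sn.max' hne ∈ S2 := mem_filter.mpr ⟨Sn.max'_mem hne, by omega⟩
      have hS2ne : S2.Nonempty := ⟨_, hyS2⟩
      have hS1ss : S1 ⊂ Sn := by
        rw [Finset.ssubset_iff_of_subset (filter_subset _ _)]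
        exact ⟨Sn.max' hne, Sn.max'_mem hne, fun hm => absurd (hub _ hm) (by omega)⟩
      have hS2ss : S2 ⊂ Sn := by
        rw [Finset.ssubset_iff_of_subset (filter_subset _ _)]
        exact ⟨u, huS, fun hm => (mem_filter.mp hm).2 (le_refl u)⟩
      have h1 := IH S1 hS1ss (subset_trans (filter_subset _ _) hsub) hS1ne
      have h2 := IH S2 hS2ss (subset_trans (filter_subset _ _) hsub) hS2ne
      have hmem : ∀ v, v ∈ Sn ↔ v ∈ S1 ∨ v ∈ S2 := by
        intro v
        rw [hS1, hS2, mem_filter, mem_filter]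
        tauto
      have hcard : Sn.card = S1.card + S2.card := by
        rw [hS1, hS2]
        exact (Finset.card_filter_add_card_filter_not _).symm
      have hredsplit :
          ((range (a - k + 1)).filter (fun i => ∃ v ∈ Sn, i ≤ v ∧ v < i + k)) =
          ((range (a - k + 1)).filter (fun i => ∃ v ∈ S1, i ≤ v ∧ v < i + k)) ∪
          ((range (a - k + 1)).filter (fun i => ∃ v ∈ S2, i ≤ v ∧ v < i + k)) := by
        rw [← filter_or]
        apply filter_congr
        intro i _
        constructor
        · rintro ⟨v, hv, h⟩
          rcases (hmem v).1 hv with h' | h'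
          exacts [Or.inl ⟨v, h', h⟩, Or.inr ⟨v, h', h⟩]
        · rintro (⟨v, hv, h⟩ | ⟨v, hv, h⟩)
          exacts [⟨v, (hmem v).2 (Or.inl hv), h⟩, ⟨v, (hmem v).2 (Or.inr hv), h⟩]
      have hgreensplit :
          ((range (b - a + k - 1)).filter
            (fun i => ∃ v ∈ Sn, rootPos k a b i ≤ v ∧ v < rootPos k a b i + (k - 1))) =
          ((range (b - a + k - 1)).filter
            (fun i => ∃ v ∈ S1, rootPos k a b i ≤ v ∧ v < rootPos k a b i + (k - 1))) ∪
          ((range (b - a + k - 1)).filter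
            (fun i => ∃ v ∈ S2, rootPos k a b i ≤ v ∧ v < rootPos k a b i + (k - 1))) := by
        rw [← filter_or]
        apply filter_congr
        intro i _
        constructor
        · rintro ⟨v, hv, h⟩
          rcases (hmem v).1 hv with h' | h'
          exacts [Or.inl ⟨v, h', h⟩, Or.inr ⟨v, h', h⟩]
        · rintro (⟨v, hv, h⟩ | ⟨v, hv, h⟩)
          exacts [⟨v, (hmem v).2 (Or.inl hv), h⟩, ⟨v, (hmem v).2 (Or.inr hv), h⟩]
      have hreddisj : Disjoint
          ((range (a - k + 1)).filter (fun i => ∃ v ∈ S1, i ≤ v ∧ v < i + k))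
          ((range (a - k + 1)).filter (fun i => ∃ v ∈ S2, i ≤ v ∧ v < i + k)) := by
        rw [disjoint_left]
        intro i hi1 hi2
        obtain ⟨-, v1, hv1, g1, g2⟩ := mem_filter.mp hi1
        obtain ⟨-, v2, hv2, g3, g4⟩ := mem_filter.mp hi2
        have e1 := hub v1 hv1
        have e2 := hek v2 hv2
        omega
      have hgreendisj : Disjoint
          ((range (b - a + k - 1)).filter
            (fun i => ∃ v ∈ S1, rootPos k a b i ≤ v ∧ v < rootPos k a b i + (k - 1)))
          ((range (b - a + k - 1)).filter
            (fun i => ∃ v ∈ S2, rootPos k a b i ≤ v ∧ v < rootPos k a b i + (k - 1))) := by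
        rw [disjoint_left]
        intro i hi1 hi2
        obtain ⟨-, v1, hv1, g1, g2⟩ := mem_filter.mp hi1
        obtain ⟨-, v2, hv2, g3, g4⟩ := mem_filter.mp hi2
        have e1 := hub v1 hv1
        have e2 := hek v2 hv2
        omega
      rw [hcard, hredsplit, hgreensplit, add_mul,
        card_union_of_disjoint hreddisj, card_union_of_disjoint hgreendisj]
      calc S1.card * ((a - k + 1) + (b - a + k - 1)) +
            S2.card * ((a - k + 1) + (b - a + k - 1))
          ≤ a * (((range (a - k + 1)).filter (fun i => ∃ v ∈ S1, i ≤ v ∧ v < i + k)).card +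
              ((range (b - a + k - 1)).filter
                (fun i => ∃ v ∈ S1, rootPos k a b i ≤ v ∧ v < rootPos k a b i + (k - 1))).card) +
            a * (((range (a - k + 1)).filter (fun i => ∃ v ∈ S2, i ≤ v ∧ v < i + k)).card +
              ((range (b - a + k - 1)).filter
                (fun i => ∃ v ∈ S2, rootPos k a b i ≤ v ∧ v < rootPos k a b i + (k - 1))).card) :=
            Nat.add_le_add h1 h2
        _ = _ := by ring

set_option maxHeartbeats 1000000 in
/-- `T` is balanced: for every nonempty set `S` of non-roots, the number
`ε(S)` of edges of `T` meeting `S` satisfies `ε(S) ≥ |S|·b/a`, i.e.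
`a·ε(S) ≥ |S|·b`.  (Here `2 ≤ k ≤ a` and `b ≥ a-k+3`.) -/
theorem T_is_balanced (k a b : ℕ) (hk : 2 ≤ k) (ha : k ≤ a) (hb : a - k + 3 ≤ b)
    (S : Finset TVertex) (hS : S ⊆ whites a) (hSne : S.Nonempty) :
    S.card * b ≤ a * ((TEdges k a b).filter (fun e => (e ∩ S).Nonempty)).card := by
  classical
  set Sn := (range a).filter (fun i => Sum.inl i ∈ S) with hSn
  have himg : Sn.image Sum.inl = S := by
    ext v
    simp only [mem_image, hSn, mem_filter, mem_range]
    constructor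
    · rintro ⟨i, ⟨_, hi⟩, rfl⟩
      exact hi
    · intro hv
      have hw := hS hv
      rw [whites, mem_image] at hw
      obtain ⟨i, hi, rfl⟩ := hw
      exact ⟨i, ⟨mem_range.mp hi, hv⟩, rfl⟩
  have hcard : S.card = Sn.card := by
    rw [← himg, card_image_of_injective _ Sum.inl_injective]
  have hsub : Sn ⊆ range a := filter_subset _ _
  have hne : Sn.Nonempty := by
    obtain ⟨v, hv⟩ := hSne
    have hw := hS hv
    rw [whites, mem_image] at hw
    obtain ⟨i, hi, rfl⟩ := hw
    exact ⟨i, mem_filter.mpr ⟨hi, hv⟩⟩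
  have hnoinr : ∀ r, Sum.inr r ∉ S := by
    intro r hr
    have hw := hS hr
    rw [whites, mem_image] at hw
    obtain ⟨i, _, h⟩ := hw
    exact absurd h (by simp)
  have hsegS : ∀ j len, ((whiteSeg j len ∩ S).Nonempty ↔ ∃ v ∈ Sn, j ≤ v ∧ v < j + len) := by
    intro j len
    constructor
    · rintro ⟨z, hz⟩
      rw [mem_inter] at hz
      obtain ⟨hz1, hz2⟩ := hz
      rcases z with zi | zr
      · rw [mem_whiteSeg] at hz1
        have hva := hS hz2
        rw [whites, mem_image] at hva
        obtain ⟨i2, hi2, heq⟩ := hva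
        have hie : i2 = zi := by injection heq
        refine ⟨zi, mem_filter.mpr ⟨mem_range.mpr ?_, hz2⟩, hz1.1, hz1.2⟩
        have := mem_range.mp hi2
        omega
      · exact absurd hz1 inr_not_mem_whiteSeg
    · rintro ⟨v, hv, h1, h2⟩
      rw [mem_filter] at hv
      exact ⟨Sum.inl v, mem_inter.mpr ⟨mem_whiteSeg.mpr ⟨h1, h2⟩, hv.2⟩⟩
  have hinjred : Set.InjOn (redEdge k) (range (a - k + 1)) := by
    intro i _ j _ hij
    have h1 : Sum.inl i ∈ redEdge k j := by
      rw [← hij, redEdge, mem_whiteSeg]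
      omega
    have h2 : Sum.inl j ∈ redEdge k i := by
      rw [hij, redEdge, mem_whiteSeg]
      omega
    rw [redEdge, mem_whiteSeg] at h1 h2
    omega
  have hinjgreen : Set.InjOn (greenEdge k a b) (range (b - a + k - 1)) := by
    intro i _ j _ hij
    have h1 : Sum.inr i ∈ greenEdge k a b j := by
      rw [← hij, greenEdge]
      exact mem_insert_self _ _
    rw [greenEdge, mem_insert] at h1
    rcases h1 with h1 | h1
    · injection h1
    · exact absurd h1 inr_not_mem_whiteSeg
  have hdisjRG : Disjoint ((range (a - k + 1)).image (redEdge k))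
      ((range (b - a + k - 1)).image (greenEdge k a b)) := by
    rw [disjoint_left]
    intro e he1 he2
    obtain ⟨i, _, rfl⟩ := mem_image.mp he1
    obtain ⟨j, _, hj⟩ := mem_image.mp he2
    have : Sum.inr j ∈ redEdge k i := by
      rw [← hj, greenEdge]
      exact mem_insert_self _ _
    exact absurd this inr_not_mem_whiteSeg
  have hsplit : ((TEdges k a b).filter (fun e => (e ∩ S).Nonempty)).card =
      ((range (a - k + 1)).filter (fun i => ∃ v ∈ Sn, i ≤ v ∧ v < i + k)).card +
      ((range (b - a + k - 1)).filter
        (fun i => ∃ v ∈ Sn, rootPos k a b i ≤ v ∧ v < rootPos k a b i + (k - 1))).card := by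
    rw [TEdges, filter_union,
      card_union_of_disjoint (disjoint_filter_filter hdisjRG)]
    congr 1
    · rw [Finset.filter_image, card_image_of_injOn
        (hinjred.mono (by intro i hi; exact mem_coe.mp (by simpa using (mem_filter.mp hi).1)))]
      congr 1
      apply filter_congr
      intro i _
      simp only [redEdge]
      exact hsegS i k
    · rw [Finset.filter_image, card_image_of_injOn
        (hinjgreen.mono (by intro i hi; exact mem_coe.mp (by simpa using (mem_filter.mp hi).1)))]
      congr 1
      apply filter_congr
      intro i _
      rw [greenEdge, insert_inter_of_notMem (hnoinr i)]
      exact hsegS _ _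
  rw [hcard, hsplit]
  calc Sn.card * b ≤ Sn.card * ((a - k + 1) + (b - a + k - 1)) :=
        Nat.mul_le_mul_left _ (by omega)
    _ ≤ _ := main_nat k a b hk ha hb Sn hsub hne
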